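/- arXiv:2605.07532 — 3 statements merged into one kernel-verified Lean document; each statement's English description precedes it below -/
import Mathlib

section
/- Let 0 < h ≤ 1, I = [t₁, t₂] ⊂ ℝ, and f ∈ H¹(ℝ) with Fourier support in [-π/h, π/h]. Then sup_{t∈I} ‖(e^{-6h^{-2}t(∂_h - ∂_x)} - e^{-t∂_x³}) f‖_{L²(ℝ)} ≤ C max(|t₁|, |t₂|)^{1/5} h^{2/5} ‖f‖_{H¹(ℝ)}, where e^{-6h^{-2}t(∂_h - ∂_x)} is the Fourier multiplier with symbol e^{-6ih^{-3}t(sin(hξ)-hξ)} and e^{-t∂_x³} has symbol e^{itξ³}. -/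
open Real MeasureTheory

section aux
open intervalIntegral

lemma aux_step1 {x : ℝ} (hx : 0 ≤ x) : x - Real.sin x ≤ x ^ 3 / 6 := by
  have h1 : ∫ t in (0:ℝ)..x, (1 - Real.cos t) = x - Real.sin x := by
    rw [integral_sub intervalIntegrable_const (intervalIntegrable_cos), integral_cos]
    simp
  have h2 : ∫ t in (0:ℝ)..x, (t ^ 2 / 2) = x ^ 3 / 6 := by
    simp [intervalIntegral.integral_div, integral_pow]; ring
  rw [← h1, ← h2]
  apply intervalIntegral.integral_mono_on hx
  · exact (continuous_const.sub Real.continuous_cos).intervalIntegrable _ _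
  · exact (Continuous.div_const (continuous_pow 2) 2).intervalIntegrable _ _
  · intro t ht
    nlinarith [Real.one_sub_sq_div_two_le_cos (x := t)]

lemma aux_step2 {x : ℝ} (hx : 0 ≤ x) : Real.cos x - 1 + x ^ 2 / 2 ≤ x ^ 4 / 24 := by
  have h1 : ∫ t in (0:ℝ)..x, (t - Real.sin t) = Real.cos x - 1 + x ^ 2 / 2 := by
    rw [integral_sub (intervalIntegrable_id) (intervalIntegrable_sin), integral_sin,
      integral_id]
    simp
    ring
  have h2 : ∫ t in (0:ℝ)..x, (t ^ 3 / 6) = x ^ 4 / 24 := by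
    simp [intervalIntegral.integral_div, integral_pow]; ring
  rw [← h1, ← h2]
  apply intervalIntegral.integral_mono_on hx
  · exact (continuous_id.sub Real.continuous_sin).intervalIntegrable _ _
  · exact (Continuous.div_const (continuous_pow 3) 6).intervalIntegrable _ _
  · intro t ht
    have := aux_step1 ht.1
    linarith

lemma aux_step3 {x : ℝ} (hx : 0 ≤ x) : Real.sin x - x + x ^ 3 / 6 ≤ x ^ 5 / 120 := by
  have h1 : ∫ t in (0:ℝ)..x, (Real.cos t - 1 + t ^ 2 / 2)
      = Real.sin x - x + x ^ 3 / 6 := by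
    rw [integral_add (show IntervalIntegrable (fun t => Real.cos t - 1) volume 0 x from
        (Real.continuous_cos.sub continuous_const).intervalIntegrable _ _)
      ((Continuous.div_const (continuous_pow 2) 2).intervalIntegrable _ _),
      integral_sub intervalIntegrable_cos intervalIntegrable_const, integral_cos]
    simp [intervalIntegral.integral_div, integral_pow]
    ring
  have h2 : ∫ t in (0:ℝ)..x, (t ^ 4 / 24) = x ^ 5 / 120 := by
    simp [intervalIntegral.integral_div, integral_pow]; ring
  rw [← h1, ← h2]
  apply intervalIntegral.integral_mono_on hx
  · exact ((Real.continuous_cos.sub continuous_const).add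
      (Continuous.div_const (continuous_pow 2) 2)).intervalIntegrable _ _
  · exact (Continuous.div_const (continuous_pow 4) 24).intervalIntegrable _ _
  · intro t ht
    have := aux_step2 ht.1
    linarith

lemma aux_step3' {x : ℝ} (hx : 0 ≤ x) : 0 ≤ Real.sin x - x + x ^ 3 / 6 := by
  have h1 : ∫ t in (0:ℝ)..x, (Real.cos t - 1 + t ^ 2 / 2)
      = Real.sin x - x + x ^ 3 / 6 := by
    rw [integral_add (show IntervalIntegrable (fun t => Real.cos t - 1) volume 0 x from
        (Real.continuous_cos.sub continuous_const).intervalIntegrable _ _)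
      ((Continuous.div_const (continuous_pow 2) 2).intervalIntegrable _ _),
      integral_sub intervalIntegrable_cos intervalIntegrable_const, integral_cos]
    simp [intervalIntegral.integral_div, integral_pow]
    ring
  rw [← h1]
  apply intervalIntegral.integral_nonneg hx
  intro t ht
  nlinarith [Real.one_sub_sq_div_two_le_cos (x := t)]

lemma aux_sin_taylor (x : ℝ) : |Real.sin x - x + x ^ 3 / 6| ≤ |x| ^ 5 / 120 := by
  rcases le_or_gt 0 x with hx | hx
  · rw [abs_of_nonneg hx, abs_le]
    exact ⟨by nlinarith [aux_step3' hx, pow_nonneg hx 5], aux_step3 hx⟩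
  · have hx' : 0 ≤ -x := by linarith
    rw [abs_of_neg hx, abs_le]
    have h1 := aux_step3 hx'
    have h2 := aux_step3' hx'
    rw [Real.sin_neg] at h1 h2
    constructor <;> nlinarith

lemma aux_exp_I_sub_one (θ : ℝ) : ‖Complex.exp ((θ:ℂ) * Complex.I) - 1‖ ≤ |θ| := by
  have h : Complex.exp ((θ:ℂ) * Complex.I) - 1
      = Complex.ofReal (Real.cos θ - 1) + Complex.ofReal (Real.sin θ) * Complex.I := by
    rw [Complex.exp_mul_I]; push_cast; ring
  rw [h, Complex.norm_add_mul_I]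
  rw [show |θ| = Real.sqrt (θ^2) by rw [Real.sqrt_sq_eq_abs]]
  apply Real.sqrt_le_sqrt
  nlinarith [Real.sin_sq_add_cos_sq θ, Real.one_sub_sq_div_two_le_cos (x := θ)]

lemma aux_exp_dist (a b : ℝ) :
    ‖Complex.exp ((a:ℂ) * Complex.I) - Complex.exp ((b:ℂ) * Complex.I)‖
      ≤ min 2 |a - b| := by
  have h1 : ∀ x : ℝ, ‖Complex.exp ((x:ℂ) * Complex.I)‖ = 1 := fun x =>
    Complex.norm_exp_ofReal_mul_I x
  apply le_min
  · calc ‖Complex.exp ((a:ℂ)*Complex.I) - Complex.exp ((b:ℂ)*Complex.I)‖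
        ≤ ‖Complex.exp ((a:ℂ)*Complex.I)‖ + ‖Complex.exp ((b:ℂ)*Complex.I)‖ :=
          norm_sub_le _ _
      _ = 2 := by rw [h1, h1]; norm_num
  · have h : Complex.exp ((a:ℂ)*Complex.I) - Complex.exp ((b:ℂ)*Complex.I)
        = Complex.exp ((b:ℂ)*Complex.I) * (Complex.exp (((a-b:ℝ):ℂ)*Complex.I) - 1) := by
      rw [mul_sub, ← Complex.exp_add, mul_one]; push_cast; ring_nf
    rw [h, norm_mul, h1, one_mul]
    exact aux_exp_I_sub_one _

lemma aux_min_bound {c x : ℝ} (hc : 0 ≤ c) (hx : 0 ≤ x) :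
    min 2 (c * x ^ 5) ≤ 2 * c ^ ((1:ℝ)/5) * x := by
  have hy : 0 ≤ c ^ ((1:ℝ)/5) := Real.rpow_nonneg hc _
  have hy5 : (c ^ ((1:ℝ)/5)) ^ 5 = c := by
    rw [← Real.rpow_natCast (c ^ ((1:ℝ)/5)) 5, ← Real.rpow_mul hc]
    norm_num
  set y := c ^ ((1:ℝ)/5) * x with hydef
  have hy0 : 0 ≤ y := mul_nonneg hy hx
  rcases le_or_gt 1 y with h1 | h1
  · calc min 2 (c * x ^ 5) ≤ 2 := min_le_left _ _
      _ ≤ 2 * y := by linarith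
      _ = 2 * c ^ ((1:ℝ)/5) * x := by rw [hydef]; ring
  · calc min 2 (c * x ^ 5) ≤ c * x ^ 5 := min_le_right _ _
      _ = y ^ 5 := by rw [hydef, mul_pow, hy5]
      _ ≤ y := by
          calc y ^ 5 ≤ y ^ 1 := pow_le_pow_of_le_one hy0 h1.le (by norm_num)
            _ = y := pow_one y
      _ ≤ 2 * y := by linarith
      _ = 2 * c ^ ((1:ℝ)/5) * x := by rw [hydef]; ring

end aux

/-- Convergence of the Toda linear propagator to the Airy flow on band-limited data,
    on the Fourier side: for F = f̂ supported in [-π/h, π/h], uniformly on [t₁,t₂],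
    the L² difference of the two flows is ≤ C max(|t₁|,|t₂|)^{1/5} h^{2/5} ‖f‖_{H¹}. -/
theorem stmt9 : ∃ C > 0, ∀ (h : ℝ), 0 < h → h ≤ 1 →
    ∀ (t₁ t₂ : ℝ) (F : ℝ → ℂ),
      Function.support F ⊆ Set.Icc (-(π / h)) (π / h) →
      Integrable (fun ξ => (1 + ξ ^ 2) * ‖F ξ‖ ^ 2) →
      ∀ t ∈ Set.Icc t₁ t₂,
        Real.sqrt (∫ ξ : ℝ,
            ‖(Complex.exp (-6 * Complex.I * ((t / h ^ 3 : ℝ) : ℂ) *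
                  ((Real.sin (h * ξ) - h * ξ : ℝ) : ℂ))
              - Complex.exp (Complex.I * (t : ℂ) * (ξ : ℂ) ^ 3)) * F ξ‖ ^ 2)
          ≤ C * (max |t₁| |t₂|) ^ ((1 : ℝ) / 5) * h ^ ((2 : ℝ) / 5) *
            Real.sqrt (∫ ξ : ℝ, (1 + ξ ^ 2) * ‖F ξ‖ ^ 2) := by
  refine ⟨2, by norm_num, ?_⟩
  intro h hh hh1 t₁ t₂ F hsupp hint t ht
  set M := max |t₁| |t₂| with hMdef
  have hM : 0 ≤ M := (abs_nonneg t₁).trans (le_max_left _ _)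
  have htM : |t| ≤ M := by
    rw [abs_le]
    constructor
    · calc -M ≤ -|t₁| := by simp [hMdef, le_max_left]
        _ ≤ t₁ := neg_abs_le t₁
        _ ≤ t := ht.1
    · calc t ≤ t₂ := ht.2
        _ ≤ |t₂| := le_abs_self t₂
        _ ≤ M := le_max_right _ _
  set D := 2 * M ^ ((1:ℝ)/5) * h ^ ((2:ℝ)/5) with hDdef
  have hD : 0 ≤ D :=
    mul_nonneg (mul_nonneg (by norm_num) (Real.rpow_nonneg hM _))
      (Real.rpow_nonneg hh.le _)
  -- pointwise bound
  have key : ∀ ξ : ℝ,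
      ‖(Complex.exp (-6 * Complex.I * ((t / h ^ 3 : ℝ) : ℂ) *
            ((Real.sin (h * ξ) - h * ξ : ℝ) : ℂ))
        - Complex.exp (Complex.I * (t : ℂ) * (ξ : ℂ) ^ 3)) * F ξ‖ ^ 2
      ≤ D ^ 2 * ((1 + ξ ^ 2) * ‖F ξ‖ ^ 2) := by
    intro ξ
    set a : ℝ := -6 * (t / h ^ 3) * (Real.sin (h * ξ) - h * ξ) with hadef
    set b : ℝ := t * ξ ^ 3 with hbdef
    have hA : -6 * Complex.I * ((t / h ^ 3 : ℝ) : ℂ) *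
        ((Real.sin (h * ξ) - h * ξ : ℝ) : ℂ) = (a : ℂ) * Complex.I := by
      rw [hadef]; push_cast; ring
    have hB : Complex.I * (t : ℂ) * (ξ : ℂ) ^ 3 = (b : ℂ) * Complex.I := by
      rw [hbdef]; push_cast; ring
    have hd : ‖Complex.exp (-6 * Complex.I * ((t / h ^ 3 : ℝ) : ℂ) *
          ((Real.sin (h * ξ) - h * ξ : ℝ) : ℂ))
        - Complex.exp (Complex.I * (t : ℂ) * (ξ : ℂ) ^ 3)‖ ≤ D * Real.sqrt (1 + ξ ^ 2) := by
      rw [hA, hB]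
      refine (aux_exp_dist a b).trans ?_
      have hab : |a - b| ≤ (M * h ^ 2) * |ξ| ^ 5 := by
        have habe : a - b = -6 * (t / h ^ 3) *
            (Real.sin (h * ξ) - h * ξ + (h * ξ) ^ 3 / 6) := by
          rw [hadef, hbdef]
          field_simp
          ring
        have hst := aux_sin_taylor (h * ξ)
        have h3 : (0:ℝ) < h ^ 3 := by positivity
        calc |a - b| = 6 * (|t| / h ^ 3) * |Real.sin (h * ξ) - h * ξ + (h * ξ) ^ 3 / 6| := by
              rw [habe, abs_mul, abs_mul, abs_div, abs_of_pos h3]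
              norm_num
          _ ≤ 6 * (|t| / h ^ 3) * (|h * ξ| ^ 5 / 120) := by
              apply mul_le_mul_of_nonneg_left hst (by positivity)
          _ = (|t| / 20) * h ^ 2 * |ξ| ^ 5 := by
              rw [abs_mul, abs_of_pos hh, mul_pow]
              field_simp
              ring
          _ ≤ (M * h ^ 2) * |ξ| ^ 5 := by
              apply mul_le_mul_of_nonneg_right _ (by positivity)
              apply mul_le_mul_of_nonneg_right _ (by positivity)
              linarith
      calc min 2 |a - b| ≤ min 2 ((M * h ^ 2) * |ξ| ^ 5) := by
            apply min_le_min le_rfl hab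
        _ ≤ 2 * (M * h ^ 2) ^ ((1:ℝ)/5) * |ξ| :=
            aux_min_bound (by positivity) (abs_nonneg ξ)
        _ = D * |ξ| := by
            rw [hDdef, Real.mul_rpow hM (by positivity)]
            rw [show ((h ^ 2 : ℝ) ^ ((1:ℝ)/5)) = h ^ ((2:ℝ)/5) by
              rw [← Real.rpow_natCast h 2, ← Real.rpow_mul hh.le]; norm_num]
            ring
        _ ≤ D * Real.sqrt (1 + ξ ^ 2) := by
            apply mul_le_mul_of_nonneg_left _ hD
            rw [show |ξ| = Real.sqrt (ξ ^ 2) by rw [Real.sqrt_sq_eq_abs]]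
            apply Real.sqrt_le_sqrt; linarith
    rw [norm_mul, mul_pow]
    have hs : (D * Real.sqrt (1 + ξ ^ 2)) ^ 2 = D ^ 2 * (1 + ξ ^ 2) := by
      rw [mul_pow, Real.sq_sqrt (by positivity)]
    calc ‖Complex.exp (-6 * Complex.I * ((t / h ^ 3 : ℝ) : ℂ) *
            ((Real.sin (h * ξ) - h * ξ : ℝ) : ℂ))
          - Complex.exp (Complex.I * (t : ℂ) * (ξ : ℂ) ^ 3)‖ ^ 2 * ‖F ξ‖ ^ 2
        ≤ (D * Real.sqrt (1 + ξ ^ 2)) ^ 2 * ‖F ξ‖ ^ 2 := by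
          apply mul_le_mul_of_nonneg_right _ (by positivity)
          exact pow_le_pow_left₀ (norm_nonneg _) hd 2
      _ = D ^ 2 * ((1 + ξ ^ 2) * ‖F ξ‖ ^ 2) := by rw [hs]; ring
  -- integral comparison
  have hint2 : Integrable (fun ξ : ℝ => D ^ 2 * ((1 + ξ ^ 2) * ‖F ξ‖ ^ 2)) :=
    hint.const_mul _
  have hmono : (∫ ξ : ℝ,
      ‖(Complex.exp (-6 * Complex.I * ((t / h ^ 3 : ℝ) : ℂ) *
            ((Real.sin (h * ξ) - h * ξ : ℝ) : ℂ))
        - Complex.exp (Complex.I * (t : ℂ) * (ξ : ℂ) ^ 3)) * F ξ‖ ^ 2)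
      ≤ ∫ ξ : ℝ, D ^ 2 * ((1 + ξ ^ 2) * ‖F ξ‖ ^ 2) := by
    apply integral_mono_of_nonneg
    · exact Filter.Eventually.of_forall fun ξ => by positivity
    · exact hint2
    · exact Filter.Eventually.of_forall key
  have hconst : (∫ ξ : ℝ, D ^ 2 * ((1 + ξ ^ 2) * ‖F ξ‖ ^ 2))
      = D ^ 2 * ∫ ξ : ℝ, (1 + ξ ^ 2) * ‖F ξ‖ ^ 2 := integral_const_mul _ _
  calc Real.sqrt (∫ ξ : ℝ,
        ‖(Complex.exp (-6 * Complex.I * ((t / h ^ 3 : ℝ) : ℂ) *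
              ((Real.sin (h * ξ) - h * ξ : ℝ) : ℂ))
          - Complex.exp (Complex.I * (t : ℂ) * (ξ : ℂ) ^ 3)) * F ξ‖ ^ 2)
      ≤ Real.sqrt (D ^ 2 * ∫ ξ : ℝ, (1 + ξ ^ 2) * ‖F ξ‖ ^ 2) := by
        apply Real.sqrt_le_sqrt
        rw [← hconst]; exact hmono
    _ = D * Real.sqrt (∫ ξ : ℝ, (1 + ξ ^ 2) * ‖F ξ‖ ^ 2) := by
        rw [Real.sqrt_mul (by positivity), Real.sqrt_sq hD]
    _ = 2 * M ^ ((1:ℝ)/5) * h ^ ((2:ℝ)/5) *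
        Real.sqrt (∫ ξ : ℝ, (1 + ξ ^ 2) * ‖F ξ‖ ^ 2) := by rw [hDdef]
end

section
/- For every θ ∈ [0,1], every h with 0 < h ≤ 1, and every ξ ∈ [-π/h, π/h), the derivative of the phase φ(ξ) = -6θh^{-3}(sin(hξ) - hξ) + (1-θ)ξ³ satisfies φ'(ξ) = 12θh^{-2}sin²(hξ/2) + 3(1-θ)ξ² ≥ (12/π²) ξ². -/
open Real

/-- The interpolated Toda/Airy phase φ(ξ) = -6θh⁻³(sin(hξ)-hξ) + (1-θ)ξ³ has derivative
    12θh⁻²sin²(hξ/2) + 3(1-θ)ξ², which is bounded below by (12/π²)ξ² on [-π/h, π/h). -/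
theorem stmt10 (θ h ξ : ℝ) (hθ0 : 0 ≤ θ) (hθ1 : θ ≤ 1) (hh0 : 0 < h) (hh1 : h ≤ 1)
    (hξ1 : -(π / h) ≤ ξ) (hξ2 : ξ < π / h) :
    HasDerivAt (fun y : ℝ => -6 * θ / h ^ 3 * (Real.sin (h * y) - h * y) + (1 - θ) * y ^ 3)
      (12 * θ / h ^ 2 * Real.sin (h * ξ / 2) ^ 2 + 3 * (1 - θ) * ξ ^ 2) ξ ∧
    (12 / π ^ 2) * ξ ^ 2
      ≤ 12 * θ / h ^ 2 * Real.sin (h * ξ / 2) ^ 2 + 3 * (1 - θ) * ξ ^ 2 := by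
  have hne : h ≠ 0 := hh0.ne'
  constructor
  · have h1 : HasDerivAt (fun y : ℝ => Real.sin (h * y) - h * y)
        (Real.cos (h * ξ) * h - h) ξ := by
      have := ((Real.hasDerivAt_sin (h * ξ)).comp ξ
        ((hasDerivAt_id ξ).const_mul h)).sub ((hasDerivAt_id ξ).const_mul h)
      convert this using 1
      · rfl
      · rfl
      · ext y; simp [Function.comp_def]
      · ring
    have h2 : HasDerivAt (fun y : ℝ => (1 - θ) * y ^ 3) ((1 - θ) * (3 * ξ ^ 2)) ξ :=
      (hasDerivAt_pow 3 ξ).const_mul (1 - θ)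
    have h3 := (h1.const_mul (-6 * θ / h ^ 3)).add h2
    convert h3 using 1
    · rfl
    · rfl
    · rfl
    have hc : Real.cos (h * ξ) = 1 - 2 * Real.sin (h * ξ / 2) ^ 2 := by
      have := Real.sin_sq_eq_half_sub (h * ξ / 2)
      rw [show 2 * (h * ξ / 2) = h * ξ by ring] at this
      linarith
    rw [hc]
    field_simp
    ring
  · have habs : |h * ξ| ≤ π := by
      rw [abs_le]
      constructor
      · have := mul_le_mul_of_nonneg_left hξ1 hh0.le
        rw [mul_neg, mul_div_cancel₀ _ hne] at this
        linarith
      · have := mul_le_mul_of_nonneg_left hξ2.le hh0.le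
        rwa [mul_div_cancel₀ _ hne] at this
    have hcos : Real.cos (h * ξ) ≤ 1 - 2 / π ^ 2 * (h * ξ) ^ 2 :=
      Real.cos_le_one_sub_mul_cos_sq habs
    have hsin : (h * ξ) ^ 2 / π ^ 2 ≤ Real.sin (h * ξ / 2) ^ 2 := by
      have hs := Real.sin_sq_eq_half_sub (h * ξ / 2)
      rw [show 2 * (h * ξ / 2) = h * ξ by ring] at hs
      have hpi : (0:ℝ) < π ^ 2 := by positivity
      rw [hs]
      rw [div_le_iff₀ hpi] at *
      have h' : 2 / π ^ 2 * (h * ξ) ^ 2 * π ^ 2 = 2 * (h * ξ) ^ 2 := by field_simp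
      nlinarith [mul_le_mul_of_nonneg_right hcos hpi.le]
    have hπ4 : (4:ℝ) ≤ π ^ 2 := by nlinarith [Real.pi_gt_three]
    have hπ : (0:ℝ) < π ^ 2 := by positivity
    have key : 12 * θ * ξ ^ 2 / π ^ 2 ≤ 12 * θ / h ^ 2 * Real.sin (h * ξ / 2) ^ 2 := by
      have : 12 * θ / h ^ 2 * ((h * ξ) ^ 2 / π ^ 2)
          ≤ 12 * θ / h ^ 2 * Real.sin (h * ξ / 2) ^ 2 := by
        apply mul_le_mul_of_nonneg_left hsin; positivity
      calc 12 * θ * ξ ^ 2 / π ^ 2 = 12 * θ / h ^ 2 * ((h * ξ) ^ 2 / π ^ 2) := by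
            field_simp
        _ ≤ _ := this
    have h2 : 12 / π ^ 2 * ((1 - θ) * ξ ^ 2) ≤ 3 * (1 - θ) * ξ ^ 2 := by
      rw [div_mul_eq_mul_div, div_le_iff₀ hπ]
      nlinarith [mul_nonneg (mul_nonneg (sub_nonneg.2 hθ1) (sq_nonneg ξ)) (sub_nonneg.2 hπ4)]
    calc (12 / π ^ 2) * ξ ^ 2 = 12 * θ * ξ ^ 2 / π ^ 2 + 12 / π ^ 2 * ((1 - θ) * ξ ^ 2) := by
          ring
      _ ≤ _ := add_le_add key h2
end

section
/- Let 0 < h ≤ 1 and f^h ∈ H¹(hℤ). Define g^h on hℤ by g^h(λ) = h^{-2}(exp(h² f^h(λ)) - 1). Then g^h ∈ H¹(hℤ) and ‖g^h - f^h‖_{H¹(hℤ)} ≤ C h^{1/2} exp(‖f^h‖_{L²(hℤ)}) with C independent of h. -/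
open Real

lemma phi_nonneg (t : ℝ) : 0 ≤ exp t - 1 - t := by
  have := add_one_le_exp t; linarith

lemma phi_le_exp_abs (t : ℝ) : exp t - 1 - t ≤ exp |t| := by
  rcases le_or_gt 0 t with ht | ht
  · rw [abs_of_nonneg ht]; linarith
  · rw [abs_of_neg ht]
    have h1 := add_one_le_exp (-t)
    have h2 : exp t ≤ 1 := by simpa using exp_le_exp.mpr ht.le
    linarith

lemma phi_le_sq_mul_exp_abs (t : ℝ) : exp t - 1 - t ≤ t^2 * exp |t| := by
  rcases le_or_gt 0 t with ht | ht
  · rw [abs_of_nonneg ht]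
    have h1 := add_one_le_exp (-t)
    have h2 : exp t * exp (-t) = 1 := by rw [← exp_add]; simp
    nlinarith [exp_pos t, exp_pos (-t), sq_nonneg t]
  · rw [abs_of_neg ht]
    have h1 : -t + 1 ≤ exp (-t) := add_one_le_exp (-t)
    have h2 : exp t * exp (-t) = 1 := by rw [← exp_add]; simp
    have h4 : exp t * (-t + 1) ≤ 1 := by
      calc exp t * (-t + 1) ≤ exp t * exp (-t) :=
            mul_le_mul_of_nonneg_left h1 (exp_pos t).le
      _ = 1 := h2
    have h5 : t^2 * (-t + 1) ≤ t^2 * exp (-t) := mul_le_mul_of_nonneg_left h1 (sq_nonneg t)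
    nlinarith [exp_pos t, sq_nonneg t, mul_pos (neg_pos.mpr ht) (neg_pos.mpr ht)]

lemma sq_le_exp_half (S : ℝ) (hS : 0 ≤ S) : S^2 ≤ 16 * exp (S/2) := by
  have h1 : S/4 + 1 ≤ exp (S/4) := add_one_le_exp _
  have h2 : exp (S/2) = exp (S/4) ^ 2 := by rw [← exp_nat_mul]; norm_num; ring
  nlinarith [exp_pos (S/4)]

lemma pow4_le_exp (S : ℝ) (hS : 0 ≤ S) : S^4 ≤ 256 * exp S := by
  have h1 : S/4 + 1 ≤ exp (S/4) := add_one_le_exp _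
  have h2 : exp S = exp (S/4) ^ 4 := by rw [← exp_nat_mul]; norm_num; ring
  have h3 : S ≤ 4 * exp (S/4) := by linarith
  calc S^4 ≤ (4 * exp (S/4))^4 := pow_le_pow_left₀ hS h3 4
  _ = 256 * exp (S/4) ^ 4 := by ring
  _ = 256 * exp S := by rw [h2]

lemma keyA (S t : ℝ) (hS : 0 < S) (ht : |t| ≤ S) :
    (exp t - 1 - t) * S ≤ 8 * |t| * exp S := by
  rcases le_or_gt S (2 * |t|) with hc | hc
  · have h1 : exp t - 1 - t ≤ exp S := (phi_le_exp_abs t).trans (exp_le_exp.mpr ht)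
    nlinarith [phi_nonneg t, exp_pos S, abs_nonneg t]
  · have h1 : exp t - 1 - t ≤ t^2 * exp (S/2) := by
      refine (phi_le_sq_mul_exp_abs t).trans ?_
      exact mul_le_mul_of_nonneg_left (exp_le_exp.mpr (by linarith)) (sq_nonneg t)
    have h2 : S^2 ≤ 16 * exp (S/2) := sq_le_exp_half S hS.le
    have h3 : exp (S/2) * exp (S/2) = exp S := by rw [← exp_add]; ring_nf
    have ht2 : t^2 = |t| * |t| := by rw [abs_mul_abs_self]; ring
    have h4 : (exp t - 1 - t) * S ≤ |t| * (|t| * S) * exp (S/2) := by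
      calc (exp t - 1 - t) * S ≤ t^2 * exp (S/2) * S := mul_le_mul_of_nonneg_right h1 hS.le
      _ = |t| * (|t| * S) * exp (S/2) := by rw [ht2]; ring
    have h5 : |t| * S ≤ S^2 / 2 := by nlinarith [abs_nonneg t]
    calc (exp t - 1 - t) * S ≤ |t| * (|t| * S) * exp (S/2) := h4
    _ ≤ |t| * (S^2/2) * exp (S/2) :=
        mul_le_mul_of_nonneg_right (mul_le_mul_of_nonneg_left h5 (abs_nonneg t)) (exp_pos _).le
    _ ≤ |t| * (8 * exp (S/2)) * exp (S/2) :=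
        mul_le_mul_of_nonneg_right
          (mul_le_mul_of_nonneg_left (by linarith) (abs_nonneg t)) (exp_pos _).le
    _ = 8 * |t| * (exp (S/2) * exp (S/2)) := by ring
    _ = 8 * |t| * exp S := by rw [h3]

set_option maxHeartbeats 1000000 in
/-- For f ∈ H¹(hℤ), the function g(λ) = h⁻²(exp(h²f(λ)) - 1) is in H¹(hℤ) and
    ‖g - f‖_{H¹(hℤ)} ≤ C h^{1/2} exp(‖f‖_{L²(hℤ)}), with C independent of h. -/
theorem stmt12 : ∃ C > 0, ∀ (h : ℝ), 0 < h → h ≤ 1 → ∀ f : ℤ → ℝ,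
    Summable (fun n => (f n) ^ 2) →
    Summable (fun n => (f (n + 1) - f n) ^ 2) →
    (Summable (fun n => ((Real.exp (h ^ 2 * f n) - 1) / h ^ 2) ^ 2) ∧
     Summable (fun n => ((Real.exp (h ^ 2 * f (n + 1)) - 1) / h ^ 2
        - (Real.exp (h ^ 2 * f n) - 1) / h ^ 2) ^ 2) ∧
     Real.sqrt (h * (∑' n : ℤ, ((Real.exp (h ^ 2 * f n) - 1) / h ^ 2 - f n) ^ 2)
        + (1 / h) * ∑' n : ℤ,
            (((Real.exp (h ^ 2 * f (n + 1)) - 1) / h ^ 2 - f (n + 1))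
              - ((Real.exp (h ^ 2 * f n) - 1) / h ^ 2 - f n)) ^ 2)
      ≤ C * Real.sqrt h * Real.exp (Real.sqrt (h * ∑' n : ℤ, (f n) ^ 2))) := by
  refine ⟨36, by norm_num, ?_⟩
  intro h hh0 hh1 f hf2 hfd
  have hne : h ≠ 0 := ne_of_gt hh0
  have hne2 : h^2 ≠ 0 := pow_ne_zero 2 hne
  set T : ℝ := ∑' n : ℤ, (f n)^2 with hTdef
  have hT0 : 0 ≤ T := tsum_nonneg (fun n => sq_nonneg _)
  set N : ℝ := Real.sqrt T with hNdef
  have hN0 : 0 ≤ N := Real.sqrt_nonneg _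
  have hN2 : N^2 = T := Real.sq_sqrt hT0
  have hfnT : ∀ n, (f n)^2 ≤ T := fun n => hf2.le_tsum n (fun m _ => sq_nonneg _)
  have hfnN : ∀ n, |f n| ≤ N := fun n => by
    rw [← Real.sqrt_sq_eq_abs]; exact Real.sqrt_le_sqrt (hfnT n)
  set Φ : ℤ → ℝ := fun n => exp (h^2 * f n) - 1 - h^2 * f n with hΦdef
  have hΦ0 : ∀ n, 0 ≤ Φ n := fun n => phi_nonneg _
  have habs : ∀ n, |h^2 * f n| ≤ h^2 * N := fun n => by
    rw [abs_mul, abs_of_nonneg (sq_nonneg h)]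
    exact mul_le_mul_of_nonneg_left (hfnN n) (sq_nonneg h)
  -- universal quadratic bound on Φ
  have hΦle : ∀ n, Φ n ≤ (h^2 * f n)^2 * exp (h^2 * N) := fun n =>
    (phi_le_sq_mul_exp_abs _).trans
      (mul_le_mul_of_nonneg_left (exp_le_exp.mpr (habs n)) (sq_nonneg _))
  have hΦsqle : ∀ n, (Φ n)^2 ≤ (h^8 * N^2 * exp (h^2*N)^2) * (f n)^2 := by
    intro n
    have h1 : (Φ n)^2 ≤ ((h^2 * f n)^2 * exp (h^2 * N))^2 :=
      pow_le_pow_left₀ (hΦ0 n) (hΦle n) 2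
    calc (Φ n)^2 ≤ ((h^2 * f n)^2 * exp (h^2 * N))^2 := h1
    _ = h^8 * exp (h^2*N)^2 * ((f n)^2 * (f n)^2) := by ring
    _ ≤ h^8 * exp (h^2*N)^2 * (T * (f n)^2) := by
        have := mul_le_mul_of_nonneg_right (hfnT n) (sq_nonneg (f n))
        have hpos : (0:ℝ) ≤ h^8 * exp (h^2*N)^2 := by positivity
        exact mul_le_mul_of_nonneg_left this hpos
    _ = (h^8 * N^2 * exp (h^2*N)^2) * (f n)^2 := by rw [← hN2]; ring
  have hsumΦ2 : Summable (fun n => (Φ n)^2) :=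
    Summable.of_nonneg_of_le (fun n => sq_nonneg _) hΦsqle
      (hf2.mul_left _)
  have hsumψ2 : Summable (fun n => (Φ n / h^2)^2) := by
    simpa [div_pow] using hsumΦ2.div_const ((h^2)^2)
  have hsumψ2' : Summable (fun n : ℤ => (Φ (n+1) / h^2)^2) := by
    have := ((Equiv.addRight (1:ℤ)).summable_iff (f := fun n => (Φ n / h^2)^2)).mpr hsumψ2
    simpa [Function.comp_def] using this
  -- first conjunct
  have eE : ∀ n : ℤ, (exp (h^2 * f n) - 1)/h^2 = Φ n / h^2 + f n := by
    intro n; field_simp [hΦdef]; ring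
  have conj1 : Summable (fun n => ((Real.exp (h ^ 2 * f n) - 1) / h ^ 2) ^ 2) := by
    refine Summable.of_nonneg_of_le (fun n => sq_nonneg _) (fun n => ?_)
      ((hsumψ2.mul_left 2).add (hf2.mul_left 2))
    rw [eE n]
    nlinarith [sq_nonneg (Φ n / h^2 - f n)]
  -- second conjunct
  have conj2 : Summable (fun n => ((Real.exp (h ^ 2 * f (n + 1)) - 1) / h ^ 2
        - (Real.exp (h ^ 2 * f n) - 1) / h ^ 2) ^ 2) := by
    refine Summable.of_nonneg_of_le (fun n => sq_nonneg _) (fun n => ?_)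
      (((hsumψ2'.mul_left 4).add (hsumψ2.mul_left 4)).add (hfd.mul_left 2))
    rw [eE n, eE (n+1)]
    nlinarith [sq_nonneg ((Φ (n+1)/h^2 - Φ n/h^2) - (f (n+1) - f n)),
      sq_nonneg (Φ (n+1)/h^2 + Φ n/h^2), sq_nonneg (Φ (n+1)/h^2 - Φ n/h^2)]
  refine ⟨conj1, conj2, ?_⟩
  -- main estimate
  set S : ℝ := Real.sqrt (h * T) with hSdef
  have hS0 : 0 ≤ S := Real.sqrt_nonneg _
  have hS2 : S^2 = h * T := Real.sq_sqrt (by positivity)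
  have hSN : S = Real.sqrt h * N := by rw [hSdef, hNdef, Real.sqrt_mul hh0.le]
  have hsh : Real.sqrt h * Real.sqrt h = h := Real.mul_self_sqrt hh0.le
  have hsh1 : Real.sqrt h ≤ 1 := by
    rw [show (1:ℝ) = Real.sqrt 1 by simp]; exact Real.sqrt_le_sqrt hh1
  have hsh0 : 0 < Real.sqrt h := Real.sqrt_pos.mpr hh0
  -- rewrite the goal tsums
  have eψ : ∀ n : ℤ, (Real.exp (h ^ 2 * f n) - 1) / h ^ 2 - f n = Φ n / h^2 := by
    intro n; field_simp [hΦdef]; try ring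
  have hrw1 : ∑' n : ℤ, ((Real.exp (h ^ 2 * f n) - 1) / h ^ 2 - f n) ^ 2
      = ∑' n : ℤ, (Φ n / h^2)^2 := tsum_congr (fun n => by rw [eψ n])
  have hrw2 : ∑' n : ℤ, (((Real.exp (h ^ 2 * f (n + 1)) - 1) / h ^ 2 - f (n + 1))
              - ((Real.exp (h ^ 2 * f n) - 1) / h ^ 2 - f n)) ^ 2
      = ∑' n : ℤ, (Φ (n+1) / h^2 - Φ n / h^2)^2 :=
    tsum_congr (fun n => by rw [eψ n, eψ (n+1)])
  rw [hrw1, hrw2]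
  set P : ℝ := ∑' n : ℤ, (Φ n)^2 with hPdef
  have hP0 : 0 ≤ P := tsum_nonneg (fun n => sq_nonneg _)
  have hA : ∑' n : ℤ, (Φ n / h^2)^2 = P / h^4 := by
    rw [show (fun n : ℤ => (Φ n / h^2)^2) = fun n : ℤ => (Φ n)^2 / h^4 by
      funext n; rw [div_pow, ← pow_mul]]
    exact tsum_div_const
  have hshift_eq : ∑' n : ℤ, (Φ (n+1) / h^2)^2 = ∑' n : ℤ, (Φ n / h^2)^2 := by
    have := (Equiv.addRight (1:ℤ)).tsum_eq (fun n => (Φ n / h^2)^2)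
    simpa using this
  have hsumdψ : Summable (fun n : ℤ => (Φ (n+1) / h^2 - Φ n / h^2)^2) := by
    refine Summable.of_nonneg_of_le (fun n => sq_nonneg _) (fun n => ?_)
      ((hsumψ2'.mul_left 2).add (hsumψ2.mul_left 2))
    nlinarith [sq_nonneg (Φ (n+1)/h^2 + Φ n/h^2)]
  have hB : ∑' n : ℤ, (Φ (n+1) / h^2 - Φ n / h^2)^2 ≤ 4 * (P / h^4) := by
    have hle : ∀ n : ℤ, (Φ (n+1) / h^2 - Φ n / h^2)^2
        ≤ 2 * (Φ (n+1)/h^2)^2 + 2 * (Φ n/h^2)^2 := fun n => by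
      nlinarith [sq_nonneg (Φ (n+1)/h^2 + Φ n/h^2)]
    calc ∑' n : ℤ, (Φ (n+1) / h^2 - Φ n / h^2)^2
        ≤ ∑' n : ℤ, (2 * (Φ (n+1)/h^2)^2 + 2 * (Φ n/h^2)^2) :=
          Summable.tsum_le_tsum hle hsumdψ ((hsumψ2'.mul_left 2).add (hsumψ2.mul_left 2))
    _ = 2 * (∑' n : ℤ, (Φ (n+1)/h^2)^2) + 2 * (∑' n : ℤ, (Φ n/h^2)^2) := by
          rw [Summable.tsum_add (hsumψ2'.mul_left 2) (hsumψ2.mul_left 2), tsum_mul_left, tsum_mul_left]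
    _ = 4 * (P / h^4) := by rw [hshift_eq, hA]; ring
  -- unified bound on P
  have hP6 : P ≤ 256 * h^6 * exp S ^ 2 := by
    rcases le_or_gt (2*(h^2*N)) S with hcase | hcase
    · -- small h case
      have hexp : exp (h^2*N)^2 ≤ exp S := by
        rw [sq, ← exp_add]
        exact exp_le_exp.mpr (by linarith)
      have hpt : ∀ n : ℤ, (Φ n)^2 ≤ (h^8 * N^2 * exp S) * (f n)^2 := by
        intro n
        refine (hΦsqle n).trans ?_
        have hc0 : (0:ℝ) ≤ h^8 * N^2 := by positivity
        exact mul_le_mul_of_nonneg_right (mul_le_mul_of_nonneg_left hexp hc0) (sq_nonneg _)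
      have hPle : P ≤ (h^8 * N^2 * exp S) * T := by
        calc P ≤ ∑' n : ℤ, (h^8 * N^2 * exp S) * (f n)^2 :=
              Summable.tsum_le_tsum hpt hsumΦ2 (hf2.mul_left _)
        _ = (h^8 * N^2 * exp S) * T := tsum_mul_left
      have hS4 : S^4 ≤ 256 * exp S := pow4_le_exp S hS0
      have hS2' : S^2 = h * N^2 := by rw [hS2, hN2]
      have hS4' : S^4 = h^2 * N^4 := by
        rw [show S^4 = (S^2)^2 by ring, hS2']; ring
      have heq : (h^8 * N^2 * exp S) * T = h^6 * S^4 * exp S := by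
        rw [← hN2, hS4']; ring
      calc P ≤ h^6 * S^4 * exp S := by rw [← heq]; exact hPle
      _ ≤ h^6 * (256 * exp S) * exp S := by
          have : h^6 * S^4 ≤ h^6 * (256 * exp S) :=
            mul_le_mul_of_nonneg_left hS4 (by positivity)
          exact mul_le_mul_of_nonneg_right this (exp_pos S).le
      _ = 256 * h^6 * exp S ^ 2 := by ring
    · -- large h case
      have hNpos : 0 < N := by
        rcases lt_or_eq_of_le hN0 with hr | hr
        · exact hr
        · exfalso; rw [← hr] at hcase; simp at hcase; linarith
      have hSpos : 0 < S := by
        rw [hSN]; positivity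
      have hh43 : 1 < 4 * h^3 := by
        have h1 : Real.sqrt h * N < 2 * h^2 * N := by rw [hSN] at hcase; linarith
        have h2 : Real.sqrt h < 2 * h^2 := (mul_lt_mul_iff_left₀ hNpos).mp h1
        have h3 : h < 4 * h^4 := by
          calc h = Real.sqrt h * Real.sqrt h := hsh.symm
          _ < (2 * h^2) * (2 * h^2) := mul_lt_mul'' h2 h2 hsh0.le hsh0.le
          _ = 4 * h^4 := by ring
        have h4 : h * 1 < h * (4 * h^3) := by linarith [h3]
        exact (mul_lt_mul_iff_right₀ hh0).mp h4
      have htS : ∀ n : ℤ, |h^2 * f n| ≤ S := by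
        intro n
        refine (habs n).trans ?_
        rw [hSN]
        have hhs : h^2 ≤ Real.sqrt h := by nlinarith [hsh, hsh1, hsh0.le]
        exact mul_le_mul_of_nonneg_right hhs hN0
      have hpt : ∀ n : ℤ, (Φ n)^2 ≤ (64 * h^4 * exp S ^ 2 / S^2) * (f n)^2 := by
        intro n
        have hk := keyA S (h^2 * f n) hSpos (htS n)
        have hk0 : 0 ≤ Φ n * S := mul_nonneg (hΦ0 n) hS0
        have hsq : (Φ n)^2 * S^2 ≤ 64 * (h^2 * f n)^2 * exp S ^ 2 := by
          calc (Φ n)^2 * S^2 = (Φ n * S) * (Φ n * S) := by ring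
          _ ≤ (8 * |h^2 * f n| * exp S) * (8 * |h^2 * f n| * exp S) :=
              mul_self_le_mul_self hk0 hk
          _ = 64 * (|h^2 * f n| * |h^2 * f n|) * exp S ^ 2 := by ring
          _ = 64 * (h^2 * f n)^2 * exp S ^ 2 := by rw [abs_mul_abs_self]; ring
        rw [div_mul_eq_mul_div, le_div_iff₀ (by positivity : (0:ℝ) < S^2)]
        calc (Φ n)^2 * S^2 ≤ 64 * (h^2 * f n)^2 * exp S ^ 2 := hsq
        _ = 64 * h^4 * exp S ^ 2 * (f n)^2 := by ring
      have hPle : P ≤ (64 * h^4 * exp S ^ 2 / S^2) * T := by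
        calc P ≤ ∑' n : ℤ, (64 * h^4 * exp S ^ 2 / S^2) * (f n)^2 :=
              Summable.tsum_le_tsum hpt hsumΦ2 (hf2.mul_left _)
        _ = (64 * h^4 * exp S ^ 2 / S^2) * T := tsum_mul_left
      have hTpos : 0 < T := by rw [← hN2]; positivity
      have heq : (64 * h^4 * exp S ^ 2 / S^2) * T = 64 * h^3 * exp S ^ 2 := by
        rw [hS2]; field_simp [hne, ne_of_gt hTpos]
      have h64 : 64 * h^3 * exp S ^2 ≤ 256 * h^6 * exp S ^2 := by
        have : 64 * h^3 ≤ 256 * h^6 := by nlinarith [pow_pos hh0 3]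
        exact mul_le_mul_of_nonneg_right this (sq_nonneg _)
      calc P ≤ 64 * h^3 * exp S ^ 2 := by rw [← heq]; exact hPle
      _ ≤ 256 * h^6 * exp S ^ 2 := h64
  -- final computation
  have hXle : h * (∑' n : ℤ, (Φ n / h^2)^2)
      + (1/h) * ∑' n : ℤ, (Φ (n+1) / h^2 - Φ n / h^2)^2
      ≤ 1296 * h * exp S ^ 2 := by
    rw [hA]
    have h1 : (1/h) * (∑' n : ℤ, (Φ (n+1) / h^2 - Φ n / h^2)^2)
        ≤ (1/h) * (4 * (P / h^4)) :=
      mul_le_mul_of_nonneg_left hB (by positivity)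
    have h2 : h * (P / h^4) + (1/h) * (4 * (P / h^4)) = (h^2 * P + 4 * P) / h^5 := by
      field_simp
    have h3 : (h^2 * P + 4 * P) / h^5 ≤ 5 * P / h^5 := by
      have hnum : h^2 * P + 4 * P ≤ 5 * P := by
        have hh2le1 : h^2 ≤ 1 := by nlinarith
        have := mul_le_mul_of_nonneg_right hh2le1 hP0
        linarith
      exact (div_le_div_iff_of_pos_right (by positivity : (0:ℝ) < h^5)).mpr hnum
    have h4 : 5 * P / h^5 ≤ 1280 * h * exp S ^2 := by
      rw [div_le_iff₀ (by positivity : (0:ℝ) < h^5)]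
      calc 5 * P ≤ 5 * (256 * h^6 * exp S ^2) := by linarith
      _ = 1280 * h * exp S ^2 * h^5 := by ring
    have h5 : (0:ℝ) ≤ h * exp S ^ 2 := by positivity
    linarith [h1, h3, h4]
  calc Real.sqrt (h * (∑' n : ℤ, (Φ n / h^2)^2)
      + (1/h) * ∑' n : ℤ, (Φ (n+1) / h^2 - Φ n / h^2)^2)
      ≤ Real.sqrt ((36 * Real.sqrt h * exp S)^2) := by
        apply Real.sqrt_le_sqrt
        have : (36 * Real.sqrt h * exp S)^2 = 1296 * h * exp S ^ 2 := by
          rw [mul_pow, mul_pow, Real.sq_sqrt hh0.le]; ring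
        rw [this]; exact hXle
  _ = 36 * Real.sqrt h * exp S := Real.sqrt_sq (by positivity)
end
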